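/- Let A and B be relational structures over disjoint signatures. If both A and B are homogeneous, then the wreath product A ≀ B is homogeneous: every isomorphism between finite substructures of A ≀ B extends to an automorphism of A ≀ B. -/
import Mathlib


/-- Arities of the wreath-product signature: the lifted `τ`-relations, the lifted
`σ`-relations, and the binary equivalence relation `E`. -/
@[reducible] def wAr {ιτ ισ : Type*} (arτ : ιτ → ℕ) (arσ : ισ → ℕ) : ιτ ⊕ (ισ ⊕ Unit) → ℕ
  | .inl i => arτ i
  | .inr (.inl i) => arσ i
  | .inr (.inr _) => 2

/-- Relations of the wreath product `A ≀ B` on domain `A × B`. -/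
def wRel {A B ιτ ισ : Type*} (arτ : ιτ → ℕ) (arσ : ισ → ℕ)
    (RA : ∀ i, (Fin (arτ i) → A) → Prop) (RB : ∀ i, (Fin (arσ i) → B) → Prop) :
    ∀ i : ιτ ⊕ (ισ ⊕ Unit), (Fin (wAr arτ arσ i) → A × B) → Prop
  | .inl i => fun t => (∀ j k, (t j).2 = (t k).2) ∧ RA i (fun j => (t j).1)
  | .inr (.inl i) => fun t => RB i (fun j => (t j).2)
  | .inr (.inr _) => fun t => (t 0).2 = (t 1).2

/-- A bijection is an automorphism of a relational structure if it preserves all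
relations in both directions. -/
def IsAut {X ι : Type*} (ar : ι → ℕ) (R : ∀ i, (Fin (ar i) → X) → Prop) (g : X ≃ X) : Prop :=
  ∀ (i : ι) (u : Fin (ar i) → X), R i (fun j => g (u j)) ↔ R i u

/-- A relational structure is homogeneous if every isomorphism between finite
induced substructures (given by injective enumerations satisfying the same
relations) extends to an automorphism. -/
def Homog {X ι : Type*} (ar : ι → ℕ) (R : ∀ i, (Fin (ar i) → X) → Prop) : Prop :=
  ∀ (k : ℕ) (s t : Fin k → X), Function.Injective s → Function.Injective t →
    (∀ (i : ι) (m : Fin (ar i) → Fin k), R i (fun j => s (m j)) ↔ R i (fun j => t (m j))) →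
    ∃ g : X ≃ X, IsAut ar R g ∧ ∀ j, g (s j) = t j

/-- Homogeneity with the injectivity hypotheses relaxed to "matching kernels". -/
lemma homog_extend {X ι : Type*} (ar : ι → ℕ) (R : ∀ i, (Fin (ar i) → X) → Prop)
    (hX : Homog ar R) (k : ℕ) (s t : Fin k → X)
    (hker : ∀ j j', s j = s j' ↔ t j = t j')
    (hrel : ∀ (i : ι) (m : Fin (ar i) → Fin k),
      R i (fun j => s (m j)) ↔ R i (fun j => t (m j))) :
    ∃ g : X ≃ X, IsAut ar R g ∧ ∀ j, g (s j) = t j := by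
  classical
  set Im : Finset X := Finset.univ.image s with hIm
  set n := Im.card with hn
  set e : Im ≃ Fin n := Im.equivFin with he
  have hmem : ∀ p : Fin n, ∃ j, s j = ((e.symm p) : X) := by
    intro p
    obtain ⟨j, -, hj⟩ := Finset.mem_image.mp (e.symm p).2
    exact ⟨j, hj⟩
  set rep : Fin n → Fin k := fun p => Classical.choose (hmem p) with hrep
  have hrepspec : ∀ p, s (rep p) = ((e.symm p) : X) := fun p => Classical.choose_spec (hmem p)
  set s' : Fin n → X := fun p => s (rep p) with hs'
  set t' : Fin n → X := fun p => t (rep p) with ht'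
  have hsmem : ∀ j, s j ∈ Im := fun j => Finset.mem_image.mpr ⟨j, Finset.mem_univ j, rfl⟩
  set cls : Fin k → Fin n := fun j => e ⟨s j, hsmem j⟩ with hcls
  have hscls : ∀ j, s' (cls j) = s j := by
    intro j
    show s (rep (e ⟨s j, hsmem j⟩)) = s j
    rw [hrepspec, Equiv.symm_apply_apply]
  have htcls : ∀ j, t' (cls j) = t j := by
    intro j
    exact (hker _ _).mp (hscls j)
  have hs'inj : Function.Injective s' := by
    intro p q hpq
    have : ((e.symm p) : X) = ((e.symm q) : X) := by
      rw [← hrepspec, ← hrepspec]; exact hpq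
    have : e.symm p = e.symm q := Subtype.ext this
    exact e.symm.injective this
  have ht'inj : Function.Injective t' := by
    intro p q hpq
    exact hs'inj ((hker _ _).mpr hpq)
  have hrel' : ∀ (i : ι) (m : Fin (ar i) → Fin n),
      R i (fun j => s' (m j)) ↔ R i (fun j => t' (m j)) := by
    intro i m
    exact hrel i (fun j => rep (m j))
  obtain ⟨g, hgaut, hg⟩ := hX n s' t' hs'inj ht'inj hrel'
  refine ⟨g, hgaut, fun j => ?_⟩
  rw [← hscls j, hg, htcls]

/-- If `A` and `B` are homogeneous relational structures over disjoint
signatures, then the wreath product `A ≀ B` is homogeneous. -/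
theorem stmt_8 {A B : Type*} {ιτ ισ : Type*} (arτ : ιτ → ℕ) (arσ : ισ → ℕ)
    (RA : ∀ i, (Fin (arτ i) → A) → Prop) (RB : ∀ i, (Fin (arσ i) → B) → Prop)
    (hA : Homog arτ RA) (hB : Homog arσ RB) :
    Homog (wAr arτ arσ) (wRel arτ arσ RA RB) := by
  intro k s t hs ht hrel
  classical
  -- Matching of the equivalence relation E
  have hE : ∀ j j', (s j).2 = (s j').2 ↔ (t j).2 = (t j').2 := by
    intro j j'
    have := hrel (.inr (.inr ())) ![j, j']
    simpa [wRel] using this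
  -- The automorphism of B
  obtain ⟨h, hAutB, hhs⟩ := homog_extend arσ RB hB k (fun j => (s j).2) (fun j => (t j).2)
    (fun j j' => hE j j') (fun i m => hrel (.inr (.inl i)) m)
  -- Fiberwise automorphisms of A
  have hF : ∀ b : B, ∃ g : A ≃ A, IsAut arτ RA g ∧
      ∀ j, (s j).2 = b → g (s j).1 = (t j).1 := by
    intro b
    by_cases hb : ∃ j0, (s j0).2 = b
    · set C : Finset (Fin k) := Finset.univ.filter (fun j => (s j).2 = b) with hC
      set n := C.card with hn
      set e : C ≃ Fin n := C.equivFin with he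
      have hmemC : ∀ p : Fin n, (s ((e.symm p) : Fin k)).2 = b := by
        intro p
        exact (Finset.mem_filter.mp (e.symm p).2).2
      have hker : ∀ p q : Fin n,
          (s ((e.symm p) : Fin k)).1 = (s ((e.symm q) : Fin k)).1 ↔
          (t ((e.symm p) : Fin k)).1 = (t ((e.symm q) : Fin k)).1 := by
        intro p q
        constructor
        · intro h1
          have hsec : (s ((e.symm p) : Fin k)).2 = (s ((e.symm q) : Fin k)).2 := by
            rw [hmemC p, hmemC q]
          have : s ((e.symm p) : Fin k) = s ((e.symm q) : Fin k) := Prod.ext h1 hsec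
          have := hs this
          rw [this]
        · intro h1
          have hsec : (s ((e.symm p) : Fin k)).2 = (s ((e.symm q) : Fin k)).2 := by
            rw [hmemC p, hmemC q]
          have htsec : (t ((e.symm p) : Fin k)).2 = (t ((e.symm q) : Fin k)).2 :=
            (hE _ _).mp hsec
          have : t ((e.symm p) : Fin k) = t ((e.symm q) : Fin k) := Prod.ext h1 htsec
          have := ht this
          rw [this]
      have hrelC : ∀ (i : ιτ) (m : Fin (arτ i) → Fin n),
          RA i (fun p => (s ((e.symm (m p)) : Fin k)).1) ↔
          RA i (fun p => (t ((e.symm (m p)) : Fin k)).1) := by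
        intro i m
        have key := hrel (.inl i) (fun p => ((e.symm (m p)) : Fin k))
        simp only [wRel] at key
        have h1 : ∀ p q : Fin (arτ i),
            (s ((e.symm (m p)) : Fin k)).2 = (s ((e.symm (m q)) : Fin k)).2 := by
          intro p q; rw [hmemC, hmemC]
        have h2 : ∀ p q : Fin (arτ i),
            (t ((e.symm (m p)) : Fin k)).2 = (t ((e.symm (m q)) : Fin k)).2 :=
          fun p q => (hE _ _).mp (h1 p q)
        constructor
        · intro hra
          exact (key.mp ⟨h1, hra⟩).2
        · intro hra
          exact (key.mpr ⟨h2, hra⟩).2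
      obtain ⟨f, hfaut, hf⟩ := homog_extend arτ RA hA n
        (fun p => (s ((e.symm p) : Fin k)).1) (fun p => (t ((e.symm p) : Fin k)).1)
        hker hrelC
      refine ⟨f, hfaut, ?_⟩
      intro j hj
      have hjC : j ∈ C := by rw [hC]; simp [hj]
      have := hf (e ⟨j, hjC⟩)
      simpa using this
    · refine ⟨Equiv.refl A, fun i u => Iff.rfl, fun j hj => absurd ⟨j, hj⟩ hb⟩
  set F : B → A ≃ A := fun b => Classical.choose (hF b) with hFdef
  have hFaut : ∀ b, IsAut arτ RA (F b) := fun b => (Classical.choose_spec (hF b)).1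
  have hFspec : ∀ b, ∀ j, (s j).2 = b → (F b) (s j).1 = (t j).1 :=
    fun b => (Classical.choose_spec (hF b)).2
  -- The wreath automorphism
  refine ⟨⟨fun x => ((F x.2) x.1, h x.2), fun x => ((F (h.symm x.2)).symm x.1, h.symm x.2),
    ?_, ?_⟩, ?_, ?_⟩
  · intro x
    simp
  · intro x
    simp
  · -- IsAut
    intro i u
    match i with
    | .inl i =>
      simp only [wRel, Equiv.coe_fn_mk]
      constructor
      · rintro ⟨h1, h2⟩
        have h1' : ∀ p q, (u p).2 = (u q).2 := fun p q => h.injective (h1 p q)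
        refine ⟨h1', ?_⟩
        rcases isEmpty_or_nonempty (Fin (arτ i)) with hem | hne
        · have heq : (fun p => (F (u p).2) (u p).1) = (fun p => (u p).1) :=
            funext fun p => (hem.false p).elim
          rwa [heq] at h2
        · obtain ⟨p0⟩ := hne
          have heq : (fun p => (F (u p).2) (u p).1) = (fun p => (F (u p0).2) (u p).1) :=
            funext fun p => by rw [h1' p p0]
          rw [heq] at h2
          exact (hFaut (u p0).2 i (fun p => (u p).1)).mp h2
      · rintro ⟨h1, h2⟩
        refine ⟨fun p q => by rw [h1 p q], ?_⟩
        rcases isEmpty_or_nonempty (Fin (arτ i)) with hem | hne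
        · have heq : (fun p => (F (u p).2) (u p).1) = (fun p => (u p).1) :=
            funext fun p => (hem.false p).elim
          rwa [heq]
        · obtain ⟨p0⟩ := hne
          have heq : (fun p => (F (u p).2) (u p).1) = (fun p => (F (u p0).2) (u p).1) :=
            funext fun p => by rw [h1 p p0]
          rw [heq]
          exact (hFaut (u p0).2 i (fun p => (u p).1)).mpr h2
    | .inr (.inl i) =>
      simp only [wRel, Equiv.coe_fn_mk]
      exact hAutB i (fun p => (u p).2)
    | .inr (.inr _) =>
      simp only [wRel, Equiv.coe_fn_mk]
      exact ⟨fun hh => h.injective hh, fun hh => by rw [hh]⟩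
  · -- extends s to t
    intro j
    show ((F (s j).2) (s j).1, h (s j).2) = t j
    have h1 : (F (s j).2) (s j).1 = (t j).1 := hFspec (s j).2 j rfl
    have h2 : h (s j).2 = (t j).2 := hhs j
    exact Prod.ext h1 h2
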